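/- arXiv:1709.09281 — 2 statements merged into one kernel-verified Lean document; each statement's English description precedes it below -/
import Mathlib

section
/- Scaling limit of positive rational functions: let f = A/B be a ratio of Laurent polynomials with nonnegative coefficients in n variables, and let C ⊂ R^n be an open linearity chamber of the piecewise linear function f^t. Then for (ξ, e^{iν}) ∈ C × (S^1)^n, as s → ∞: (1/s)·log|f(e^{sξ+iν})| → f^t(ξ), and f(e^{sξ+iν})/|f(e^{sξ+iν})| → e^{i(M_1-N_1)(ν)}, where M_1 and N_1 are the exponents of the monomials of A and B achieving the unique maximum on C. -/
open Finset Filter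

/-- Evaluation of a Laurent polynomial with nonnegative rational coefficients at the
point `(e^{sξ₁+iν₁}, …, e^{sξₙ+iνₙ})` of the complex torus. -/
noncomputable def evalExp {n : ℕ} (A : (Fin n → ℤ) →₀ ℚ)
    (ξ : Fin n → ℝ) (ν : Fin n → ℝ) (s : ℝ) : ℂ :=
  ∑ a ∈ A.support, (A a : ℂ) * Complex.exp (∑ i, (a i : ℂ) * (s * ξ i + Complex.I * ν i))

/-- The pairing `⟨a, ξ⟩ = Σ aᵢ ξᵢ`. -/
noncomputable def pairing {n : ℕ} (a : Fin n → ℤ) (ξ : Fin n → ℝ) : ℝ :=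
  ∑ i, (a i : ℝ) * ξ i

lemma exp_sum_eq {n : ℕ} (a : Fin n → ℤ) (ξ ν : Fin n → ℝ) (s : ℝ) :
    Complex.exp (∑ i, (a i : ℂ) * (s * ξ i + Complex.I * ν i)) =
    Complex.exp ((s : ℂ) * pairing a ξ + Complex.I * pairing a ν) := by
  congr 1
  simp only [pairing]
  push_cast
  rw [Finset.mul_sum, Finset.mul_sum, ← Finset.sum_add_distrib]
  exact Finset.sum_congr rfl fun i _ => by ring

lemma ratio_tendsto {n : ℕ} (A : (Fin n → ℤ) →₀ ℚ) (ξ ν : Fin n → ℝ) (a₁ : Fin n → ℤ)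
    (ha₁ : a₁ ∈ A.support)
    (hdom : ∀ a ∈ A.support, a ≠ a₁ → pairing a ξ < pairing a₁ ξ) :
    Tendsto (fun s : ℝ => evalExp A ξ ν s /
        Complex.exp ((s : ℂ) * pairing a₁ ξ + Complex.I * pairing a₁ ν))
      atTop (nhds (A a₁ : ℂ)) := by
  have key : ∀ s : ℝ, evalExp A ξ ν s /
      Complex.exp ((s : ℂ) * pairing a₁ ξ + Complex.I * pairing a₁ ν) =
      ∑ a ∈ A.support, (A a : ℂ) *
        Complex.exp (((s * (pairing a ξ - pairing a₁ ξ) : ℝ) : ℂ) +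
          Complex.I * ((pairing a ν - pairing a₁ ν : ℝ) : ℂ)) := by
    intro s
    rw [evalExp, Finset.sum_div]
    refine Finset.sum_congr rfl fun a _ => ?_
    rw [exp_sum_eq, mul_div_assoc, ← Complex.exp_sub]
    congr 2
    push_cast
    ring
  have hterm : ∀ a ∈ A.support, Tendsto (fun s : ℝ => (A a : ℂ) *
      Complex.exp (((s * (pairing a ξ - pairing a₁ ξ) : ℝ) : ℂ) +
        Complex.I * ((pairing a ν - pairing a₁ ν : ℝ) : ℂ)))
      atTop (nhds (if a = a₁ then (A a : ℂ) else 0)) := by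
    intro a ha
    by_cases h : a = a₁
    · subst h
      simp
    · simp only [if_neg h]
      rw [tendsto_zero_iff_norm_tendsto_zero]
      have hnorm : ∀ s : ℝ, ‖(A a : ℂ) *
          Complex.exp (((s * (pairing a ξ - pairing a₁ ξ) : ℝ) : ℂ) +
            Complex.I * ((pairing a ν - pairing a₁ ν : ℝ) : ℂ))‖ =
          ‖(A a : ℂ)‖ * Real.exp (s * (pairing a ξ - pairing a₁ ξ)) := by
        intro s
        rw [norm_mul, Complex.norm_exp]
        congr 2
        simp
      simp only [hnorm]
      have hd : pairing a ξ - pairing a₁ ξ < 0 := sub_neg.mpr (hdom a ha h)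
      have h1 : Tendsto (fun s : ℝ => s * (pairing a ξ - pairing a₁ ξ)) atTop atBot :=
        tendsto_id.atTop_mul_const_of_neg hd
      have h2 : Tendsto (fun s : ℝ => Real.exp (s * (pairing a ξ - pairing a₁ ξ)))
          atTop (nhds 0) := Real.tendsto_exp_atBot.comp h1
      simpa using h2.const_mul ‖(A a : ℂ)‖
  have hsum := tendsto_finset_sum A.support hterm
  rw [Finset.sum_ite_eq' A.support a₁ (fun a => (A a : ℂ))] at hsum
  rw [if_pos ha₁] at hsum
  exact Tendsto.congr (fun s => (key s).symm) hsum

/-- Scaling limit of positive rational functions.  Let `f = A/B` with `A, B` Laurent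
polynomials with nonnegative coefficients, and let `ξ` lie in an open linearity chamber
of `f^t`, i.e. a single monomial `a₁` of `A` and a single monomial `b₁` of `B` strictly
dominate at `ξ`.  Then, as `s → ∞`,
`(1/s)·log|f(e^{sξ+iν})| → f^t(ξ) = ⟨a₁,ξ⟩ - ⟨b₁,ξ⟩` and
`f(e^{sξ+iν})/|f(e^{sξ+iν})| → e^{i(⟨a₁,ν⟩ - ⟨b₁,ν⟩)}`. -/
theorem stmt17 {n : ℕ} (A B : (Fin n → ℤ) →₀ ℚ)
    (hA : A ≠ 0) (hB : B ≠ 0) (hAp : ∀ a, 0 ≤ A a) (hBp : ∀ a, 0 ≤ B a)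
    (ξ ν : Fin n → ℝ) (a₁ b₁ : Fin n → ℤ)
    (ha₁ : a₁ ∈ A.support) (hb₁ : b₁ ∈ B.support)
    (hdomA : ∀ a ∈ A.support, a ≠ a₁ → pairing a ξ < pairing a₁ ξ)
    (hdomB : ∀ b ∈ B.support, b ≠ b₁ → pairing b ξ < pairing b₁ ξ) :
    Tendsto (fun s : ℝ => (1 / s) * Real.log ‖evalExp A ξ ν s / evalExp B ξ ν s‖)
      atTop (nhds (pairing a₁ ξ - pairing b₁ ξ)) ∧
    Tendsto (fun s : ℝ => (evalExp A ξ ν s / evalExp B ξ ν s) /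
        (‖evalExp A ξ ν s / evalExp B ξ ν s‖ : ℂ))
      atTop (nhds (Complex.exp (Complex.I * ((pairing a₁ ν : ℂ) - pairing b₁ ν)))) := by
  -- notation
  set d : ℝ := pairing a₁ ξ - pairing b₁ ξ with hd
  set φ : ℝ := pairing a₁ ν - pairing b₁ ν with hφ
  set EA : ℝ → ℂ := fun s => Complex.exp ((s : ℂ) * pairing a₁ ξ + Complex.I * pairing a₁ ν)
  set EB : ℝ → ℂ := fun s => Complex.exp ((s : ℂ) * pairing b₁ ξ + Complex.I * pairing b₁ ν)
  set rA : ℝ → ℂ := fun s => evalExp A ξ ν s / EA s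
  set rB : ℝ → ℂ := fun s => evalExp B ξ ν s / EB s
  have hrA : Tendsto rA atTop (nhds (A a₁ : ℂ)) := ratio_tendsto A ξ ν a₁ ha₁ hdomA
  have hrB : Tendsto rB atTop (nhds (B b₁ : ℂ)) := ratio_tendsto B ξ ν b₁ hb₁ hdomB
  have hApos : (0 : ℚ) < A a₁ := lt_of_le_of_ne (hAp a₁) (Finsupp.mem_support_iff.mp ha₁).symm
  have hBpos : (0 : ℚ) < B b₁ := lt_of_le_of_ne (hBp b₁) (Finsupp.mem_support_iff.mp hb₁).symm
  set q : ℚ := A a₁ / B b₁ with hq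
  have hqpos : (0 : ℚ) < q := div_pos hApos hBpos
  set r : ℝ → ℂ := fun s => rA s / rB s
  have hr : Tendsto r atTop (nhds (q : ℂ)) := by
    have := hrA.div hrB (by exact_mod_cast hBpos.ne')
    simp only [hq, Rat.cast_div] at this ⊢
    exact this
  -- pointwise formula for f
  have hf : ∀ s : ℝ, evalExp A ξ ν s / evalExp B ξ ν s =
      r s * (Complex.exp ((s * d : ℝ) : ℂ) * Complex.exp (Complex.I * (φ : ℂ))) := by
    intro s
    have hEA : evalExp A ξ ν s = rA s * EA s := by
      rw [div_mul_cancel₀]; exact Complex.exp_ne_zero _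
    have hEB : evalExp B ξ ν s = rB s * EB s := by
      rw [div_mul_cancel₀]; exact Complex.exp_ne_zero _
    rw [hEA, hEB, mul_div_mul_comm]
    congr 1
    rw [← Complex.exp_sub, ← Complex.exp_add]
    congr 1
    simp only [hd, hφ]
    push_cast
    ring
  have hnormf : ∀ s : ℝ, ‖evalExp A ξ ν s / evalExp B ξ ν s‖ = ‖r s‖ * Real.exp (s * d) := by
    intro s
    rw [hf s, norm_mul, norm_mul,
      Complex.norm_exp, Complex.norm_exp]
    simp [mul_assoc]
  have hnr : Tendsto (fun s => ‖r s‖) atTop (nhds ((q : ℝ))) := by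
    have := hr.norm
    simpa [abs_of_pos (show (0:ℝ) < (q:ℝ) by exact_mod_cast hqpos)] using this
  have hqRpos : (0 : ℝ) < (q : ℝ) := by exact_mod_cast hqpos
  have hevpos : ∀ᶠ s in atTop, 0 < ‖r s‖ :=
    hnr.eventually (eventually_gt_nhds hqRpos |>.mono fun x hx => hx) |>.mono fun s hs => by
      simpa using hs
  constructor
  · -- first limit
    have hlog : Tendsto (fun s => Real.log ‖r s‖) atTop (nhds (Real.log (q : ℝ))) :=
      (Real.continuousAt_log hqRpos.ne').tendsto.comp hnr
    have h0 : Tendsto (fun s : ℝ => (1 / s) * Real.log ‖r s‖) atTop (nhds 0) := by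
      have := tendsto_inv_atTop_zero.mul hlog
      simpa [one_div] using this
    have hev : ∀ᶠ s in atTop, (1 / s) * Real.log ‖r s‖ + d =
        (1 / s) * Real.log ‖evalExp A ξ ν s / evalExp B ξ ν s‖ := by
      filter_upwards [hevpos, eventually_gt_atTop (0 : ℝ)] with s hrs hs
      rw [hnormf s, Real.log_mul hrs.ne' (Real.exp_pos _).ne', Real.log_exp, mul_add,
        one_div, inv_mul_cancel_left₀ hs.ne']
    have := (h0.add (tendsto_const_nhds (x := d))).congr' hev
    simpa [hd] using this
  · -- second limit
    set W : ℂ := Complex.exp (Complex.I * (φ : ℂ)) with hW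
    have hpt : ∀ s : ℝ, (evalExp A ξ ν s / evalExp B ξ ν s) /
        (‖evalExp A ξ ν s / evalExp B ξ ν s‖ : ℂ) = (r s / (‖r s‖ : ℂ)) * W := by
      intro s
      set E : ℂ := Complex.exp (((s * d : ℝ)) : ℂ) with hE
      have hEne : E ≠ 0 := Complex.exp_ne_zero _
      have hden : ((‖evalExp A ξ ν s / evalExp B ξ ν s‖ : ℝ) : ℂ) = (‖r s‖ : ℂ) * E := by
        rw [hnormf s, hE]
        push_cast
        ring
      rw [hden, hf s]
      have hnum : r s * (E * W) = (r s * W) * E := by ring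
      rw [hnum, mul_div_mul_comm, div_self hEne, mul_one, mul_div_right_comm]
    have hnrC : Tendsto (fun s => ((‖r s‖ : ℝ) : ℂ)) atTop (nhds (((q : ℝ) : ℂ))) :=
      (Complex.continuous_ofReal.tendsto _).comp hnr
    have hqC : (((q : ℝ) : ℂ)) ≠ 0 := by exact_mod_cast hqRpos.ne'
    have hmain : Tendsto (fun s => (r s / (‖r s‖ : ℂ)) * W) atTop
        (nhds (((q : ℂ) / ((q : ℝ) : ℂ)) * W)) := (hr.div hnrC hqC).mul_const W
    have hone : ((q : ℂ) / ((q : ℝ) : ℂ)) = 1 := by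
      rw [Complex.ofReal_ratCast, div_self]
      exact_mod_cast hqpos.ne'
    rw [hone, one_mul] at hmain
    have : W = Complex.exp (Complex.I * ((pairing a₁ ν : ℂ) - pairing b₁ ν)) := by
      rw [hW, hφ]; push_cast; ring_nf
    rw [show Complex.exp (Complex.I * ((pairing a₁ ν : ℂ) - pairing b₁ ν)) = W from this.symm]
    exact hmain.congr fun s => (hpt s).symm
end

section
/- For SL_2: every regular function on the Borel subgroup B (with coordinates b_11 ∈ G_m, b_12) that is dominated by the potential Φ(b) = (b_11 + b_11^{-1})/b_12 is a Laurent polynomial of the form Σ_{k≥1} Σ_{l=-k}^{k} c_{kl} b_11^l b_12^{-k} with c_{kl} ≥ 0; and conversely every such nonzero Laurent polynomial is dominated by Φ. -/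
open Finset

/-- Formal Laurent polynomials in the two toric coordinates `b₁₁, b₁₂` on the Borel
subgroup `B ⊂ SL₂` (variable `0` is `b₁₁`, variable `1` is `b₁₂`). -/
abbrev Laurent2 := AddMonoidAlgebra ℚ (Fin 2 → ℤ)

/-- Tropicalization `f^t(ξ) = max{⟨a,ξ⟩ : c_a ≠ 0}` (junk value `0` if `f = 0`). -/
noncomputable def trop (f : Laurent2) (ξ : Fin 2 → ℤ) : ℤ :=
  if h : f.coeff.support.Nonempty then f.coeff.support.sup' h (fun a => ∑ i, a i * ξ i) else 0

/-- For `SL₂`, with potential `Φ(b) = (b₁₁ + b₁₁⁻¹)/b₁₂` and potential cone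
`C_Φ = {(ξ₁₁,ξ₁₂) ∈ ℤ² : ξ₁₂ > ξ₁₁ > -ξ₁₂}`:  a nonzero Laurent polynomial `f` in
`b₁₁, b₁₂` with nonnegative rational coefficients is dominated by `Φ` (i.e.
`f^t(ξ) < 0` on `C_Φ`) if and only if each of its monomials `b₁₁^l b₁₂^{-k}` satisfies
`k ≥ 1` and `-k ≤ l ≤ k`. -/
theorem stmt19 (f : Laurent2) (hf : f ≠ 0) (hfp : ∀ a, 0 ≤ f.coeff a) :
    (∀ ξ : Fin 2 → ℤ, (ξ 1 > ξ 0 ∧ ξ 0 > -ξ 1) → trop f ξ < 0) ↔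
    (∀ a ∈ f.coeff.support, a 1 ≤ -1 ∧ a 1 ≤ a 0 ∧ a 0 ≤ -(a 1)) := by
  have hne : f.coeff.support.Nonempty := Finsupp.support_nonempty_iff.mpr (AddMonoidAlgebra.coeff_eq_zero.not.mpr hf)
  constructor
  · intro hdom a ha
    have key : ∀ ξ : Fin 2 → ℤ, (ξ 1 > ξ 0 ∧ ξ 0 > -ξ 1) → a 0 * ξ 0 + a 1 * ξ 1 < 0 := by
      intro ξ hξ
      have h1 := hdom ξ hξ
      rw [trop, dif_pos hne] at h1
      have h2 := Finset.le_sup' (fun b : Fin 2 → ℤ => ∑ i, b i * ξ i) ha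
      have hsum : (∑ i, a i * ξ i) = a 0 * ξ 0 + a 1 * ξ 1 := Fin.sum_univ_two _
      simp only [hsum] at h2
      linarith
    set N : ℤ := 1 + |a 0| with hN
    have habs1 : a 0 ≤ |a 0| := le_abs_self _
    have habs2 : -(a 0) ≤ |a 0| := neg_le_abs _
    have h1 := key ![0, 1] (by norm_num)
    simp only [Matrix.cons_val_zero, Matrix.cons_val_one, Matrix.head_cons] at h1
    have h2 := key ![1 - N, N] (by constructor <;> simp <;> omega)
    simp only [Matrix.cons_val_zero, Matrix.cons_val_one, Matrix.head_cons] at h2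
    have h3 := key ![N - 1, N] (by constructor <;> simp <;> omega)
    simp only [Matrix.cons_val_zero, Matrix.cons_val_one, Matrix.head_cons] at h3
    refine ⟨by omega, ?_, ?_⟩
    · by_contra hc
      push_neg at hc
      nlinarith [mul_le_mul_of_nonneg_left (show a 0 + 1 ≤ a 1 by omega)
        (show (0:ℤ) ≤ N by omega)]
    · by_contra hc
      push_neg at hc
      nlinarith [mul_le_mul_of_nonneg_left (show (1:ℤ) ≤ a 0 + a 1 by omega)
        (show (0:ℤ) ≤ N by omega)]
  · intro h ξ hξ
    rw [trop, dif_pos hne]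
    rw [Finset.sup'_lt_iff]
    intro a ha
    obtain ⟨h1, h2, h3⟩ := h a ha
    have hsum : (∑ i, a i * ξ i) = a 0 * ξ 0 + a 1 * ξ 1 := Fin.sum_univ_two _
    rw [hsum]
    obtain ⟨hc1, hc2⟩ := hξ
    have hpos : 0 < ξ 1 := by omega
    rcases le_or_gt 0 (a 0) with h0 | h0
    · nlinarith
    · nlinarith
end
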